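/- Let N ≥ 3 be a prime, let M_1(N) = (m_{ij}) be the N × N matrix over ZMod N defined by m_{ij} = i + Σ_{l=1}^{j-i} (N − l + 1) (mod N) for i ≤ j and symmetry, and for s ∈ ZMod N let M_1(N)^{(s)} be the matrix with entries m_{ij} + s (mod N). Then for any s, t ∈ ZMod N and any two distinct indices i ≠ j, the map k ↦ (m_{ik} + s) − (m_{jk} + t) (mod N) is a bijection of ZMod N, so the modular difference vector of row i of M_1(N)^{(s)} and row j of M_1(N)^{(t)} is a permutation of {0, 1, …, N−1}, and the Hamming distance between these rows equals N − 1. -/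

import Mathlib

/-- The `N × N` matrix `M_1(N)` over `ZMod N` with entries
`m_{ij} = i + Σ_{l=1}^{j-i} (N - l + 1) (mod N)` for `i ≤ j`, and `m_{ij} = m_{ji}` for `i > j`. -/
def M1 (N : ℕ) (i j : ℕ) : ZMod N :=
  if i ≤ j then ((i + ∑ l ∈ Finset.Icc 1 (j - i), (N - l + 1) : ℕ) : ZMod N)
  else ((j + ∑ l ∈ Finset.Icc 1 (i - j), (N - l + 1) : ℕ) : ZMod N)

lemma sumS (N d : ℕ) (h : d ≤ N) :
    (2 : ZMod N) * ((∑ l ∈ Finset.Icc 1 d, (N - l + 1) : ℕ) : ZMod N)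
      = (d : ZMod N) - (d : ZMod N) ^ 2 := by
  induction d with
  | zero => simp
  | succ d ih =>
    rw [Finset.sum_Icc_succ_top (by omega)]
    have hd : d ≤ N := by omega
    have h1 : ((N - (d + 1) + 1 : ℕ) : ZMod N) = -(d : ZMod N) := by
      have e : N - (d + 1) + 1 = N - d := by omega
      rw [e, Nat.cast_sub hd, ZMod.natCast_self]
      ring
    rw [Nat.cast_add, mul_add, ih hd, h1]
    push_cast
    ring

lemma twoM1 (N : ℕ) (i j : ℕ) (hi : i ≤ N) (hj : j ≤ N) :
    (2 : ZMod N) * M1 N i j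
      = (i : ZMod N) + j - ((j : ZMod N) - i) ^ 2 := by
  unfold M1
  rcases le_or_gt i j with h | h
  · rw [if_pos h]
    have hd : j - i ≤ N := by omega
    rw [Nat.cast_add, mul_add, sumS N (j - i) hd, Nat.cast_sub h]
    ring
  · rw [if_neg (by omega)]
    have hd : i - j ≤ N := by omega
    rw [Nat.cast_add, mul_add, sumS N (i - j) hd, Nat.cast_sub (le_of_lt h)]
    ring

theorem M1_shift_distinct_rows_difference_bijective (N : ℕ) (hN : 3 ≤ N) (hNp : N.Prime)
    (s t : ZMod N) (i j : ℕ) (hi : i < N) (hj : j < N) (hij : i ≠ j) :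
    Function.Bijective (fun k : ZMod N => (M1 N i k.val + s) - (M1 N j k.val + t)) ∧
    hammingDist (fun k : Fin N => M1 N i k + s) (fun k : Fin N => M1 N j k + t) = N - 1 := by
  haveI : NeZero N := ⟨by omega⟩
  haveI : Fact N.Prime := ⟨hNp⟩
  have h2 : (2 : ZMod N) ≠ 0 := by
    intro h
    have h' : ((2 : ℕ) : ZMod N) = 0 := by exact_mod_cast h
    have hd := (ZMod.natCast_eq_zero_iff 2 N).mp h'
    have := Nat.le_of_dvd (by norm_num) hd
    omega
  set a : ZMod N := (i : ZMod N) - j with ha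
  have hane : a ≠ 0 := by
    intro h
    apply hij
    have : (i : ZMod N) = j := by rwa [sub_eq_zero] at h
    have := congrArg ZMod.val this
    rwa [ZMod.val_cast_of_lt hi, ZMod.val_cast_of_lt hj] at this
  set b : ZMod N := (2 : ZMod N)⁻¹ * (a * (1 - i - j)) + (s - t) with hb
  have key : ∀ k : ZMod N, (M1 N i k.val + s) - (M1 N j k.val + t) = a * k + b := by
    intro k
    apply mul_left_cancel₀ h2
    have hk : (k.val : ZMod N) = k := ZMod.natCast_zmod_val k
    have hkN : k.val ≤ N := le_of_lt (ZMod.val_lt k)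
    rw [mul_sub, mul_add, mul_add, twoM1 N i k.val (le_of_lt hi) hkN,
      twoM1 N j k.val (le_of_lt hj) hkN, hk]
    rw [hb, ha]
    field_simp
    ring
  have hbij : Function.Bijective (fun k : ZMod N => a * k + b) := by
    constructor
    · intro x y h
      exact mul_left_cancel₀ hane (add_right_cancel h)
    · intro y
      exact ⟨a⁻¹ * (y - b), by field_simp; ring⟩
  constructor
  · simpa only [key] using hbij
  · -- hamming distance
    classical
    unfold hammingDist
    set g : Fin N → ZMod N := fun k => a * ((k : ℕ) : ZMod N) + b with hg
    have hgbij : Function.Bijective g := by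
      have hv : Function.Bijective (fun k : Fin N => ((k : ℕ) : ZMod N)) := by
        constructor
        · intro x y h
          have := congrArg ZMod.val h
          rw [ZMod.val_cast_of_lt x.isLt, ZMod.val_cast_of_lt y.isLt] at this
          exact Fin.ext this
        · intro z
          exact ⟨⟨z.val, z.val_lt⟩, by simp [ZMod.natCast_val]⟩
      exact hbij.comp hv
    have hne : ∀ k : Fin N,
        ((fun k : Fin N => M1 N i k + s) k ≠ (fun k : Fin N => M1 N j k + t) k) ↔ g k ≠ 0 := by
      intro k
      have hkv : ((k : ℕ) : ZMod N).val = (k : ℕ) := ZMod.val_cast_of_lt k.isLt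
      have := key ((k : ℕ) : ZMod N)
      rw [hkv] at this
      simp only [hg]
      rw [← this]
      constructor
      · intro h h0; exact h (by rwa [sub_eq_zero] at h0)
      · intro h h0; exact h (by rwa [sub_eq_zero])
    let e := Equiv.ofBijective g hgbij
    have hone : (Finset.univ.filter fun k : Fin N => ¬(g k ≠ 0)).card = 1 := by
      have : (Finset.univ.filter fun k : Fin N => ¬(g k ≠ 0)) = {e.symm 0} := by
        ext k
        simp only [Finset.mem_filter, Finset.mem_univ, true_and, Finset.mem_singleton,
          not_not]
        constructor
        · intro h; exact (Equiv.eq_symm_apply e).mpr h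
        · intro h; subst h; exact e.apply_symm_apply 0
      rw [this, Finset.card_singleton]
    have hsplit := Finset.card_filter_add_card_filter_not
      (s := (Finset.univ : Finset (Fin N))) (p := fun k : Fin N => g k ≠ 0)
    simp only [Finset.filter_congr (fun k _ => (hne k))]
    have hcard : (Finset.univ : Finset (Fin N)).card = N := by simp
    omega
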